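/- Let F be a complex-valued function holomorphic on the open right half-plane ℂ₊ = {z ∈ ℂ : Re z > 0}. Assume there are constants a₁, a₂ > 0, b₁ ≥ 0 and b₂ ∈ (0,1] such that |F(z)| ≤ a₁ (Re z)^{−b₁} for all z ∈ ℂ₊, and |F(t)| ≤ a₁ t^{−b₁} exp(−a₂ t^{−b₂}) for all real t > 0. Then for every z ∈ ℂ₊, |F(z)| ≤ a₁ 2^{b₁} (Re z)^{−b₁} exp(−(a₂ b₂ / 2) |z|^{−b₂−1} Re z). -/

import Mathlib

open Complex Set Filter Topology
open scoped Real

private lemma hasDerivAt_conj_conj {F : ℂ → ℂ} {f' x : ℂ} (h : HasDerivAt F f' x) :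
    HasDerivAt (fun w => (starRingEnd ℂ) (F ((starRingEnd ℂ) w)))
      ((starRingEnd ℂ) f') ((starRingEnd ℂ) x) := by
  rw [hasDerivAt_iff_tendsto_slope] at h ⊢
  have hc : Continuous (starRingEnd ℂ) := Complex.continuous_conj
  have hmap : Tendsto (starRingEnd ℂ) (𝓝[≠] ((starRingEnd ℂ) x)) (𝓝[≠] x) := by
    apply Tendsto.inf
    · simpa using hc.tendsto ((starRingEnd ℂ) x)
    · refine tendsto_principal_principal.2 fun y hy => ?_
      simp only [Set.mem_compl_iff, Set.mem_singleton_iff] at *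
      intro hxy
      apply hy
      rw [← hxy, Complex.conj_conj]
  have h2 := (hc.tendsto f').comp (h.comp hmap)
  refine h2.congr fun y => ?_
  simp [Function.comp, slope_def_field, map_div₀, map_sub, Complex.conj_conj]

set_option maxHeartbeats 1600000 in
private lemma aux_half
    (F : ℂ → ℂ) (hF : DifferentiableOn ℂ F {z : ℂ | 0 < z.re})
    (a₁ a₂ b₁ b₂ : ℝ) (ha₁ : 0 < a₁) (ha₂ : 0 < a₂) (hb₁ : 0 ≤ b₁)
    (hb₂ : b₂ ∈ Set.Ioc (0 : ℝ) 1)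
    (h1 : ∀ z : ℂ, 0 < z.re → ‖F z‖ ≤ a₁ * z.re ^ (-b₁))
    (h2 : ∀ t : ℝ, 0 < t →
      ‖F t‖ ≤ a₁ * t ^ (-b₁) * Real.exp (-a₂ * t ^ (-b₂))) :
    ∀ z : ℂ, 0 < z.re → 0 ≤ z.im →
      ‖F z‖ ≤
        a₁ * 2 ^ b₁ * z.re ^ (-b₁) *
          Real.exp (-(a₂ * b₂ / 2) * ‖z‖ ^ (-b₂ - 1) * z.re) := by
  obtain ⟨hb₂0, hb₂1⟩ := hb₂
  intro z hre him
  have hz0 : z ≠ 0 := fun h => by simp [h] at hre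
  have habs : 0 < ‖z‖ := norm_pos_iff.mpr hz0
  set θ := Complex.arg z with hθdef
  have hθ0 : 0 ≤ θ := Complex.arg_nonneg_iff.2 him
  have hθlt : θ < π / 2 := by
    have := Complex.abs_arg_lt_pi_div_two_iff.2 (Or.inl hre)
    exact (abs_lt.1 this).2
  have hcosθ : Real.cos θ = z.re / ‖z‖ := Complex.cos_arg hz0
  have hcosθpos : 0 < Real.cos θ := by
    rw [hcosθ]; positivity
  have hcosθ1 : Real.cos θ ≤ 1 := Real.cos_le_one θ
  set φ := Real.arccos (Real.cos θ / 2) with hφdef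
  have hφcos : Real.cos φ = Real.cos θ / 2 :=
    Real.cos_arccos (by linarith) (by linarith)
  have hφlt : φ < π / 2 := Real.arccos_lt_pi_div_two.2 (by linarith)
  have hφ0 : 0 ≤ φ := Real.arccos_nonneg _
  have hθφ : θ < φ := by
    by_contra hcon
    push_neg at hcon
    have := Real.cos_le_cos_of_nonneg_of_le_pi hφ0 (by linarith [Real.pi_pos]) hcon
    rw [hφcos] at this
    linarith
  have hsinb₂φ : 0 < Real.sin (b₂ * φ) := by
    apply Real.sin_pos_of_pos_of_lt_pi
    · exact mul_pos hb₂0 (by linarith)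
    · nlinarith [Real.pi_pos, hb₂1, hφlt, hφ0]
  have hsinb₂φ1 : Real.sin (b₂ * φ) ≤ 1 := Real.sin_le_one _
  set α := b₂ * φ - π / 2 with hαdef
  set c := a₂ / Real.sin (b₂ * φ) with hcdef
  have hc0 : 0 < c := div_pos ha₂ hsinb₂φ
  set M := a₁ * (Real.cos θ / 2) ^ (-b₁) with hMdef
  have hM0 : 0 < M := by
    apply mul_pos ha₁
    apply Real.rpow_pos_of_pos
    linarith
  have ha₁M : a₁ ≤ M := by
    rw [hMdef]
    nth_rewrite 1 [← mul_one a₁]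
    apply mul_le_mul_of_nonneg_left _ ha₁.le
    exact Real.one_le_rpow_of_pos_of_le_one_of_nonpos (by linarith) (by linarith)
      (by linarith)
  -- the auxiliary function
  set f : ℂ → ℂ := fun ζ =>
    Complex.exp (b₁ * ζ) * F (Complex.exp ζ) *
      Complex.exp ((c : ℂ) * Complex.exp ((α : ℂ) * Complex.I - (b₂ : ℂ) * ζ))
    with hfdef
  have hnorm : ∀ ζ : ℂ, ‖f ζ‖ =
      Real.exp (b₁ * ζ.re) * ‖F (Complex.exp ζ)‖ *
        Real.exp (c * (Real.exp (-(b₂ * ζ.re)) * Real.cos (α - b₂ * ζ.im))) := by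
    intro ζ
    simp only [hfdef, norm_mul, Complex.norm_exp]
    congr 2
    · congr 1
      simp [Complex.mul_re]
    · congr 1
      simp [Complex.mul_re, Complex.exp_re, Complex.sub_re, Complex.sub_im,
        Complex.mul_im]
  -- bound on the strip
  have hstrip : ∀ ζ : ℂ, 0 ≤ ζ.im → ζ.im ≤ φ → ‖f ζ‖ ≤
      M * Real.exp (c * Real.exp (-(b₂ * ζ.re))) := by
    intro ζ h0 hφ'
    rw [hnorm]
    have hexpre : (Complex.exp ζ).re = Real.exp ζ.re * Real.cos ζ.im := Complex.exp_re ζ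
    have hcosim : Real.cos φ ≤ Real.cos ζ.im :=
      Real.cos_le_cos_of_nonneg_of_le_pi h0 (by linarith [Real.pi_pos]) hφ'
    have hcosimpos : 0 < Real.cos ζ.im := by rw [hφcos] at hcosim; linarith
    have hrepos : 0 < (Complex.exp ζ).re := by
      rw [hexpre]; positivity
    have hFb := h1 _ hrepos
    have hF2 : ‖F (Complex.exp ζ)‖ ≤
        a₁ * (Real.exp ζ.re * Real.cos ζ.im) ^ (-b₁) := by
      rw [← hexpre]; exact hFb
    have hpow : (Real.exp ζ.re * Real.cos ζ.im) ^ (-b₁) ≤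
        Real.exp (-(b₁ * ζ.re)) * (Real.cos θ / 2) ^ (-b₁) := by
      rw [Real.mul_rpow (Real.exp_pos _).le hcosimpos.le]
      have h1' : (Real.exp ζ.re) ^ (-b₁) = Real.exp (-(b₁ * ζ.re)) := by
        rw [← Real.exp_mul]; ring_nf
      rw [h1']
      apply mul_le_mul_of_nonneg_left _ (Real.exp_pos _).le
      apply Real.rpow_le_rpow_of_nonpos (by linarith) (by rw [← hφcos]; exact hcosim)
        (by linarith)
    have hcos1 : Real.cos (α - b₂ * ζ.im) ≤ 1 := Real.cos_le_one _
    have e3 : Real.exp (c * (Real.exp (-(b₂ * ζ.re)) * Real.cos (α - b₂ * ζ.im))) ≤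
        Real.exp (c * Real.exp (-(b₂ * ζ.re))) := by
      apply Real.exp_le_exp.2
      nth_rewrite 2 [← mul_one (Real.exp (-(b₂ * ζ.re)))]
      apply mul_le_mul_of_nonneg_left _ hc0.le
      exact mul_le_mul_of_nonneg_left hcos1 (Real.exp_pos _).le
    calc Real.exp (b₁ * ζ.re) * ‖F (Complex.exp ζ)‖ *
        Real.exp (c * (Real.exp (-(b₂ * ζ.re)) * Real.cos (α - b₂ * ζ.im)))
        ≤ Real.exp (b₁ * ζ.re) *
            (a₁ * (Real.exp (-(b₁ * ζ.re)) * (Real.cos θ / 2) ^ (-b₁))) *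
            Real.exp (c * Real.exp (-(b₂ * ζ.re))) := by
          apply mul_le_mul
          · apply mul_le_mul_of_nonneg_left _ (Real.exp_pos _).le
            exact hF2.trans (mul_le_mul_of_nonneg_left hpow ha₁.le)
          · exact e3
          · positivity
          · positivity
      _ = M * Real.exp (c * Real.exp (-(b₂ * ζ.re))) := by
          rw [hMdef, Real.exp_neg]
          field_simp
  -- differentiability
  have hdiff : DifferentiableOn ℂ f (Complex.im ⁻¹' Set.Ioo (-(π / 2)) (π / 2)) := by
    have hd1 : Differentiable ℂ fun ζ : ℂ => Complex.exp ((b₁ : ℂ) * ζ) :=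
      (differentiable_id.const_mul _).cexp
    have hd3 : Differentiable ℂ fun ζ : ℂ =>
        Complex.exp ((c : ℂ) * Complex.exp ((α : ℂ) * Complex.I - (b₂ : ℂ) * ζ)) := by
      apply Differentiable.cexp
      apply Differentiable.const_mul
      exact ((differentiable_const _).sub (differentiable_id.const_mul _)).cexp
    have hd2 : DifferentiableOn ℂ (fun ζ => F (Complex.exp ζ))
        (Complex.im ⁻¹' Set.Ioo (-(π / 2)) (π / 2)) := by
      apply hF.comp Complex.differentiable_exp.differentiableOn
      intro ζ hζ
      simp only [Set.mem_preimage, Set.mem_Ioo] at hζ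
      simp only [Set.mem_setOf_eq, Complex.exp_re]
      have := Real.cos_pos_of_mem_Ioo hζ
      positivity
    exact ((hd1.differentiableOn.mul hd2).mul hd3.differentiableOn)
  have hsub : closure (Complex.im ⁻¹' Set.Ioo 0 φ) ⊆
      Complex.im ⁻¹' Set.Ioo (-(π / 2)) (π / 2) := by
    have h1' : closure (Complex.im ⁻¹' Set.Ioo 0 φ) ⊆ Complex.im ⁻¹' Set.Icc 0 φ :=
      closure_minimal (Set.preimage_mono Set.Ioo_subset_Icc_self)
        (isClosed_Icc.preimage Complex.continuous_im)
    refine h1'.trans (Set.preimage_mono fun t ht => ?_)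
    simp only [Set.mem_Icc] at ht
    simp only [Set.mem_Ioo]
    constructor <;> [linarith [Real.pi_pos, ht.1]; linarith [ht.2, hφlt]]
  have hfd : DiffContOnCl ℂ f (Complex.im ⁻¹' Set.Ioo 0 φ) :=
    (hdiff.mono hsub).diffContOnCl
  -- growth condition
  have hB : ∃ c' < π / (φ - 0), ∃ B, f =O[comap (_root_.abs ∘ Complex.re) atTop ⊓
      𝓟 (Complex.im ⁻¹' Set.Ioo 0 φ)]
      fun ζ => Real.exp (B * Real.exp (c' * |ζ.re|)) := by
    refine ⟨2, ?_, c, ?_⟩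
    · rw [sub_zero, lt_div_iff₀ (by linarith : (0:ℝ) < φ)]
      linarith
    · rw [Asymptotics.isBigO_iff]
      refine ⟨M, ?_⟩
      rw [Filter.eventually_inf_principal]
      apply Filter.Eventually.of_forall
      intro ζ hζ
      simp only [Set.mem_preimage, Set.mem_Ioo] at hζ
      have hb := hstrip ζ hζ.1.le hζ.2.le
      have hexp : Real.exp (-(b₂ * ζ.re)) ≤ Real.exp (2 * |ζ.re|) := by
        apply Real.exp_le_exp.2
        have h1' : -(b₂ * ζ.re) ≤ b₂ * |ζ.re| := by
          rw [← mul_neg]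
          exact mul_le_mul_of_nonneg_left (neg_le_abs ζ.re) hb₂0.le
        have h2' : b₂ * |ζ.re| ≤ 2 * |ζ.re| :=
          mul_le_mul_of_nonneg_right (by linarith) (abs_nonneg _)
        linarith
      have : ‖f ζ‖ ≤ M * Real.exp (c * Real.exp (2 * |ζ.re|)) := by
        refine hb.trans ?_
        apply mul_le_mul_of_nonneg_left _ hM0.le
        exact Real.exp_le_exp.2 (mul_le_mul_of_nonneg_left hexp hc0.le)
      refine this.trans (le_of_eq ?_)
      rw [Real.norm_eq_abs, abs_of_pos (Real.exp_pos _)]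
  -- boundary Im = 0
  have hle_a : ∀ ζ : ℂ, ζ.im = 0 → ‖f ζ‖ ≤ M := by
    intro ζ him0
    rw [hnorm]
    set r := ζ.re with hrdef
    have hζr : ζ = (r : ℂ) := Complex.ext (by simp [hrdef]) (by simp [him0])
    have hζ : Complex.exp ζ = ((Real.exp r : ℝ) : ℂ) := by
      rw [hζr]
      exact (Complex.ofReal_exp r).symm
    have hFb := h2 (Real.exp r) (Real.exp_pos r)
    rw [← hζ] at hFb
    have hpow1 : (Real.exp r) ^ (-b₁) = Real.exp (-(b₁ * r)) := by
      rw [← Real.exp_mul]; ring_nf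
    have hpow2 : (Real.exp r) ^ (-b₂) = Real.exp (-(b₂ * r)) := by
      rw [← Real.exp_mul]; ring_nf
    have hcosα : Real.cos (α - b₂ * ζ.im) = Real.sin (b₂ * φ) := by
      rw [him0, mul_zero, sub_zero, hαdef, ← Real.cos_neg, neg_sub,
        Real.cos_pi_div_two_sub]
    rw [hcosα]
    have hca : c * (Real.exp (-(b₂ * r)) * Real.sin (b₂ * φ)) =
        a₂ * Real.exp (-(b₂ * r)) := by
      rw [hcdef]; field_simp
    rw [hca]
    calc Real.exp (b₁ * r) * ‖F (Complex.exp ζ)‖ *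
          Real.exp (a₂ * Real.exp (-(b₂ * r)))
        ≤ Real.exp (b₁ * r) *
            (a₁ * Real.exp (-(b₁ * r)) * Real.exp (-a₂ * Real.exp (-(b₂ * r)))) *
            Real.exp (a₂ * Real.exp (-(b₂ * r))) := by
          apply mul_le_mul_of_nonneg_right _ (Real.exp_pos _).le
          apply mul_le_mul_of_nonneg_left _ (Real.exp_pos _).le
          calc ‖F (Complex.exp ζ)‖ ≤
              a₁ * (Real.exp r) ^ (-b₁) * Real.exp (-a₂ * (Real.exp r) ^ (-b₂)) := hFb
            _ = a₁ * Real.exp (-(b₁ * r)) * Real.exp (-a₂ * Real.exp (-(b₂ * r))) := by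
                rw [hpow1, hpow2]
      _ = a₁ := by
          rw [neg_mul, Real.exp_neg, Real.exp_neg]
          field_simp
      _ ≤ M := ha₁M
  -- boundary Im = φ
  have hle_b : ∀ ζ : ℂ, ζ.im = φ → ‖f ζ‖ ≤ M := by
    intro ζ himφ
    rw [hnorm]
    have hcosα : Real.cos (α - b₂ * ζ.im) = 0 := by
      rw [himφ, hαdef]
      have : b₂ * φ - π / 2 - b₂ * φ = -(π / 2) := by ring
      rw [this, Real.cos_neg, Real.cos_pi_div_two]
    rw [hcosα, mul_zero, mul_zero, Real.exp_zero, mul_one]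
    have hexpre : (Complex.exp ζ).re = Real.exp ζ.re * Real.cos φ := by
      rw [Complex.exp_re, himφ]
    have hcosφpos : 0 < Real.cos φ := by rw [hφcos]; linarith
    have hrepos : 0 < (Complex.exp ζ).re := by rw [hexpre]; positivity
    have hFb := h1 _ hrepos
    rw [hexpre] at hFb
    have hpow : (Real.exp ζ.re * Real.cos φ) ^ (-b₁) =
        Real.exp (-(b₁ * ζ.re)) * (Real.cos θ / 2) ^ (-b₁) := by
      rw [Real.mul_rpow (Real.exp_pos _).le hcosφpos.le, hφcos, ← Real.exp_mul]
      ring_nf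
    rw [hpow] at hFb
    calc Real.exp (b₁ * ζ.re) * ‖F (Complex.exp ζ)‖
        ≤ Real.exp (b₁ * ζ.re) *
            (a₁ * (Real.exp (-(b₁ * ζ.re)) * (Real.cos θ / 2) ^ (-b₁))) :=
          mul_le_mul_of_nonneg_left hFb (Real.exp_pos _).le
      _ = M := by
          rw [hMdef, Real.exp_neg]
          field_simp
  -- apply Phragmen-Lindelof
  have hmain := PhragmenLindelof.horizontal_strip (a := 0) (b := φ) (C := M)
    (z := Complex.log z) hfd hB hle_a hle_b
    (by rw [Complex.log_im]; exact hθ0) (by rw [Complex.log_im]; exact (le_of_lt hθφ))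
  -- unfold the conclusion
  rw [hnorm, Complex.exp_log hz0, Complex.log_re, Complex.log_im] at hmain
  have hcosα : Real.cos (α - b₂ * θ) = Real.sin (b₂ * (φ - θ)) := by
    rw [hαdef]
    have : b₂ * φ - π / 2 - b₂ * θ = -(π / 2 - b₂ * (φ - θ)) := by ring
    rw [this, Real.cos_neg, Real.cos_pi_div_two_sub]
  rw [hcosα] at hmain
  have hlogabs1 : Real.exp (b₁ * Real.log (‖z‖)) = (‖z‖) ^ b₁ := by
    rw [Real.rpow_def_of_pos habs, mul_comm]
  have hlogabs2 : Real.exp (-(b₂ * Real.log (‖z‖))) =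
      (‖z‖) ^ (-b₂) := by
    rw [Real.rpow_def_of_pos habs]; ring_nf
  rw [hlogabs1, hlogabs2] at hmain
  -- key trigonometric inequality
  have hkey : a₂ * b₂ / 2 * Real.cos θ ≤ c * Real.sin (b₂ * (φ - θ)) := by
    have hs1 : b₂ * Real.sin (φ - θ) ≤ Real.sin (b₂ * (φ - θ)) := by
      have hmem1 : φ - θ ∈ Set.Icc (0:ℝ) π := by
        constructor <;> [linarith; linarith [Real.pi_pos]]
      have hmem0 : (0:ℝ) ∈ Set.Icc (0:ℝ) π := by
        exact ⟨le_rfl, by linarith [Real.pi_pos]⟩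
      have := strictConcaveOn_sin_Icc.concaveOn.2 hmem1 hmem0 hb₂0.le
        (by linarith : (0:ℝ) ≤ 1 - b₂) (by ring)
      simpa using this
    have hs2 : Real.cos θ / 2 * Real.sin φ ≤ Real.sin (φ - θ) := by
      rw [Real.sin_sub, hφcos]
      have hsinle : Real.sin θ ≤ Real.sin φ :=
        Real.strictMonoOn_sin.monotoneOn
          (Set.mem_Icc.2 ⟨by linarith [Real.pi_pos], by linarith⟩)
          (Set.mem_Icc.2 ⟨by linarith [Real.pi_pos], by linarith⟩) hθφ.le
      have key2 : 0 ≤ Real.cos θ / 2 * (Real.sin φ - Real.sin θ) :=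
        mul_nonneg (by linarith) (by linarith)
      have expand : Real.cos θ / 2 * (Real.sin φ - Real.sin θ) =
          Real.sin φ * Real.cos θ - Real.cos θ / 2 * Real.sin θ -
            Real.cos θ / 2 * Real.sin φ := by ring
      rw [expand] at key2
      linarith
    have hs3 : Real.sin (b₂ * φ) ≤ Real.sin φ :=
      Real.strictMonoOn_sin.monotoneOn
        (Set.mem_Icc.2 ⟨by nlinarith [Real.pi_pos], by nlinarith⟩)
        (Set.mem_Icc.2 ⟨by linarith [Real.pi_pos], by linarith⟩)
        (by nlinarith)
    have hceq : c * Real.sin (b₂ * (φ - θ)) =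
        a₂ * Real.sin (b₂ * (φ - θ)) / Real.sin (b₂ * φ) := by
      rw [hcdef]; ring
    rw [hceq, le_div_iff₀ hsinb₂φ]
    calc a₂ * b₂ / 2 * Real.cos θ * Real.sin (b₂ * φ)
        ≤ a₂ * b₂ / 2 * Real.cos θ * Real.sin φ := by
          apply mul_le_mul_of_nonneg_left hs3
          positivity
      _ ≤ a₂ * (b₂ * Real.sin (φ - θ)) := by
          have := mul_le_mul_of_nonneg_left hs2 (mul_nonneg ha₂.le hb₂0.le)
          nlinarith [this]
      _ ≤ a₂ * Real.sin (b₂ * (φ - θ)) := mul_le_mul_of_nonneg_left hs1 ha₂.le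
  -- assemble
  have hxre : z.re = ‖z‖ * Real.cos θ := by
    rw [hcosθ]; field_simp
  have habspow : ∀ s : ℝ, 0 < (‖z‖) ^ s := fun s =>
    Real.rpow_pos_of_pos habs s
  have hEpos : 0 < Real.exp (c * ((‖z‖) ^ (-b₂) * Real.sin (b₂ * (φ - θ)))) :=
    Real.exp_pos _
  have hFle : ‖F z‖ ≤
      M * ((‖z‖) ^ b₁)⁻¹ *
        (Real.exp (c * ((‖z‖) ^ (-b₂) * Real.sin (b₂ * (φ - θ)))))⁻¹ := by
    have h' : ‖F z‖ =
        (‖z‖ ^ b₁ * ‖F z‖ *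
          Real.exp (c * ((‖z‖) ^ (-b₂) * Real.sin (b₂ * (φ - θ))))) *
          ((‖z‖) ^ b₁)⁻¹ *
          (Real.exp (c * ((‖z‖) ^ (-b₂) * Real.sin (b₂ * (φ - θ)))))⁻¹ := by
      field_simp
    rw [h']
    exact mul_le_mul_of_nonneg_right
      (mul_le_mul_of_nonneg_right hmain (by positivity)) (by positivity)
  refine hFle.trans ?_
  have heq1 : M * ((‖z‖) ^ b₁)⁻¹ = a₁ * 2 ^ b₁ * z.re ^ (-b₁) := by
    have e1 : z.re ^ (-b₁) = (‖z‖) ^ (-b₁) * (Real.cos θ) ^ (-b₁) := by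
      rw [hxre, Real.mul_rpow habs.le hcosθpos.le]
    have e2 : (Real.cos θ / 2) ^ (-b₁) = (Real.cos θ) ^ (-b₁) * 2 ^ b₁ := by
      rw [Real.div_rpow hcosθpos.le (by norm_num : (0:ℝ) ≤ 2),
        Real.rpow_neg (by norm_num : (0:ℝ) ≤ 2)]
      field_simp
    have e3 : ((‖z‖) ^ b₁)⁻¹ = (‖z‖) ^ (-b₁) := by
      rw [Real.rpow_neg habs.le]
    rw [hMdef, e2, e3, e1]
    ring
  rw [heq1]
  apply mul_le_mul_of_nonneg_left _ (by positivity :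
    (0:ℝ) ≤ a₁ * 2 ^ b₁ * z.re ^ (-b₁))
  rw [← Real.exp_neg]
  apply Real.exp_le_exp.2
  have hsplit : -(a₂ * b₂ / 2) * ‖z‖ ^ (-b₂ - 1) * z.re =
      -(a₂ * b₂ / 2 * Real.cos θ * ‖z‖ ^ (-b₂)) := by
    rw [hxre, Real.rpow_sub habs, Real.rpow_one, Real.rpow_neg habs.le b₂]
    field_simp
  rw [hsplit]
  have hmono : a₂ * b₂ / 2 * Real.cos θ * ‖z‖ ^ (-b₂) ≤
      c * Real.sin (b₂ * (φ - θ)) * ‖z‖ ^ (-b₂) :=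
    mul_le_mul_of_nonneg_right hkey (habspow _).le
  linarith [hmono]

set_option maxHeartbeats 1600000 in
theorem phragmen_lindelof_right_half_plane
    (F : ℂ → ℂ) (hF : DifferentiableOn ℂ F {z : ℂ | 0 < z.re})
    (a₁ a₂ b₁ b₂ : ℝ) (ha₁ : 0 < a₁) (ha₂ : 0 < a₂) (hb₁ : 0 ≤ b₁)
    (hb₂ : b₂ ∈ Set.Ioc (0 : ℝ) 1)
    (h1 : ∀ z : ℂ, 0 < z.re → ‖F z‖ ≤ a₁ * z.re ^ (-b₁))
    (h2 : ∀ t : ℝ, 0 < t →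
      ‖F t‖ ≤ a₁ * t ^ (-b₁) * Real.exp (-a₂ * t ^ (-b₂))) :
    ∀ z : ℂ, 0 < z.re →
      ‖F z‖ ≤
        a₁ * 2 ^ b₁ * z.re ^ (-b₁) *
          Real.exp (-(a₂ * b₂ / 2) * ‖z‖ ^ (-b₂ - 1) * z.re) := by
  intro z hz
  rcases le_or_gt 0 z.im with him | him
  · exact aux_half F hF a₁ a₂ b₁ b₂ ha₁ ha₂ hb₁ hb₂ h1 h2 z hz him
  · -- conjugate
    set G : ℂ → ℂ := fun w => (starRingEnd ℂ) (F ((starRingEnd ℂ) w)) with hGdef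
    have hopen : IsOpen {w : ℂ | 0 < w.re} := isOpen_lt continuous_const Complex.continuous_re
    have hGdiff : DifferentiableOn ℂ G {w : ℂ | 0 < w.re} := by
      intro w hw
      have hw' : ((starRingEnd ℂ) w) ∈ {w : ℂ | 0 < w.re} := by simpa using hw
      have hFd : DifferentiableAt ℂ F ((starRingEnd ℂ) w) :=
        hF.differentiableAt (hopen.mem_nhds hw')
      have hder := hasDerivAt_conj_conj hFd.hasDerivAt
      rw [Complex.conj_conj] at hder
      exact hder.differentiableAt.differentiableWithinAt
    have h1G : ∀ w : ℂ, 0 < w.re → ‖G w‖ ≤ a₁ * w.re ^ (-b₁) := by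
      intro w hw
      have hGw : ‖G w‖ = ‖F ((starRingEnd ℂ) w)‖ := by
        simp [hGdef]
      rw [hGw]
      have := h1 ((starRingEnd ℂ) w) (by simpa using hw)
      simpa using this
    have h2G : ∀ t : ℝ, 0 < t →
        ‖G t‖ ≤ a₁ * t ^ (-b₁) * Real.exp (-a₂ * t ^ (-b₂)) := by
      intro t ht
      have hGt : ‖G t‖ = ‖F t‖ := by
        simp [hGdef, Complex.conj_ofReal]
      rw [hGt]; exact h2 t ht
    have hres := aux_half G hGdiff a₁ a₂ b₁ b₂ ha₁ ha₂ hb₁ hb₂ h1G h2G ((starRingEnd ℂ) z)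
      (by simpa using hz) (by simp only [Complex.conj_im]; linarith)
    simpa [hGdef, Complex.conj_conj] using hres
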